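/- Let (Ω, ℱ, P) be a probability space, Y : Ω → ℝ an integrable random variable, and m ∈ ℝ with P(Y > m) = 1/2 and P(Y < m) = 1/2. Fix s₀ ∈ ℝ and γ ≥ 0. Let 𝒮 be the set of real numbers E[−S·Y] as S ranges over all measurable functions S : Ω → ℝ with s₀ − γ ≤ S ≤ s₀ + γ almost surely and E[S] = s₀. Then E[−s₀·Y] − γ·E[Y·(𝟙{Y > m} − 𝟙{Y < m})] is the least element of 𝒮: it is a lower bound for 𝒮, and it is attained by the feasible choice S* = s₀ + γ on {Y > m} and S* = s₀ − γ on {Y ≤ m}. -/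

import Mathlib

open MeasureTheory

/-- minimization half of Proposition 1 (continuous outcome, single stratum).
Among all measurable scores `S` with `s₀ - γ ≤ S ≤ s₀ + γ` a.s. and `E[S] = s₀`, the
quantity `E[-S⬝Y]` is minimized at the value
`E[-s₀⬝Y] - γ⬝E[Y⬝(𝟙{Y > m} - 𝟙{Y < m})]`, attained by the choice
`S* = s₀ + γ` on `{Y > m}` and `S* = s₀ - γ` on `{Y ≤ m}`. -/
theorem ade_lower_bound_continuous_outcome
    {Ω : Type*} [MeasurableSpace Ω] (P : Measure Ω) [IsProbabilityMeasure P]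
    (Y : Ω → ℝ) (hYm : Measurable Y) (hY : Integrable Y P) (m : ℝ)
    (hgt : P {ω | m < Y ω} = 1/2) (hlt : P {ω | Y ω < m} = 1/2)
    (s₀ γ : ℝ) (hγ : 0 ≤ γ) :
    IsLeast
      {v : ℝ | ∃ S : Ω → ℝ, Measurable S ∧
        (∀ᵐ ω ∂P, s₀ - γ ≤ S ω ∧ S ω ≤ s₀ + γ) ∧
        (∫ ω, S ω ∂P = s₀) ∧
        v = ∫ ω, -(S ω * Y ω) ∂P}
      ((∫ ω, -(s₀ * Y ω) ∂P) -
        γ * ∫ ω, Y ω * ((if m < Y ω then (1:ℝ) else 0) - (if Y ω < m then (1:ℝ) else 0)) ∂P)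
    ∧
    (Measurable (fun ω => if m < Y ω then s₀ + γ else s₀ - γ) ∧
      (∀ᵐ ω ∂P, s₀ - γ ≤ (if m < Y ω then s₀ + γ else s₀ - γ) ∧
        (if m < Y ω then s₀ + γ else s₀ - γ) ≤ s₀ + γ) ∧
      (∫ ω, (if m < Y ω then s₀ + γ else s₀ - γ) ∂P = s₀) ∧
      (∫ ω, -((if m < Y ω then s₀ + γ else s₀ - γ) * Y ω) ∂P =
        (∫ ω, -(s₀ * Y ω) ∂P) -
          γ * ∫ ω, Y ω * ((if m < Y ω then (1:ℝ) else 0) - (if Y ω < m then (1:ℝ) else 0)) ∂P)) := by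
  have hA : MeasurableSet {ω | m < Y ω} := measurableSet_lt measurable_const hYm
  have hB : MeasurableSet {ω | Y ω < m} := measurableSet_lt hYm measurable_const
  set g : Ω → ℝ := fun ω => Y ω * ((if m < Y ω then (1:ℝ) else 0) - (if Y ω < m then (1:ℝ) else 0)) with hg_def
  have hIndA : Measurable (fun ω => if m < Y ω then (1:ℝ) else 0) :=
    Measurable.ite hA measurable_const measurable_const
  have hIndB : Measurable (fun ω => if Y ω < m then (1:ℝ) else 0) :=
    Measurable.ite hB measurable_const measurable_const
  have hgMeas : Measurable g := hYm.mul (hIndA.sub hIndB)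
  have hgInt : Integrable g P := by
    refine hY.mono hgMeas.aestronglyMeasurable (ae_of_all _ fun ω => ?_)
    simp only [Real.norm_eq_abs, hg_def, abs_mul]
    have h1 : |(if m < Y ω then (1:ℝ) else 0) - (if Y ω < m then (1:ℝ) else 0)| ≤ 1 := by
      split_ifs <;> norm_num
    calc |Y ω| * |(if m < Y ω then (1:ℝ) else 0) - (if Y ω < m then (1:ℝ) else 0)|
        ≤ |Y ω| * 1 := mul_le_mul_of_nonneg_left h1 (abs_nonneg _)
      _ = |Y ω| := by ring
  have hIA : ∫ ω, (if m < Y ω then (1:ℝ) else 0) ∂P = 1/2 := by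
    have h : (fun ω => if m < Y ω then (1:ℝ) else 0)
        = Set.indicator {ω | m < Y ω} (fun _ => (1:ℝ)) := by
      funext ω; simp [Set.indicator_apply]
    rw [h, integral_indicator_const (1:ℝ) hA, measureReal_def, hgt]
    simp [ENNReal.toReal_div]
  have hIB : ∫ ω, (if Y ω < m then (1:ℝ) else 0) ∂P = 1/2 := by
    have h : (fun ω => if Y ω < m then (1:ℝ) else 0)
        = Set.indicator {ω | Y ω < m} (fun _ => (1:ℝ)) := by
      funext ω; simp [Set.indicator_apply]
    rw [h, integral_indicator_const (1:ℝ) hB, measureReal_def, hlt]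
    simp [ENNReal.toReal_div]
  have hIndAInt : Integrable (fun ω => if m < Y ω then (1:ℝ) else 0) P := by
    refine (integrable_const (1:ℝ)).mono' hIndA.aestronglyMeasurable (ae_of_all _ fun ω => ?_)
    simp only [Real.norm_eq_abs]
    split_ifs <;> norm_num
  have hψInt : Integrable (fun ω => |Y ω - m|) P := (hY.sub (integrable_const m)).abs
  have hIndBInt : Integrable (fun ω => if Y ω < m then (1:ℝ) else 0) P := by
    refine (integrable_const (1:ℝ)).mono' hIndB.aestronglyMeasurable (ae_of_all _ fun ω => ?_)
    simp only [Real.norm_eq_abs]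
    split_ifs <;> norm_num
  -- ∫ g = ∫ |Y - m|
  have hgψ : ∫ ω, g ω ∂P = ∫ ω, |Y ω - m| ∂P := by
    have hpt : ∀ ω, g ω = |Y ω - m| + m * (if m < Y ω then (1:ℝ) else 0)
        - m * (if Y ω < m then (1:ℝ) else 0) := by
      intro ω
      rcases lt_trichotomy m (Y ω) with h | h | h
      · rw [hg_def]
        simp only [if_pos h, if_neg (not_lt.2 h.le), abs_of_pos (by linarith : (0:ℝ) < Y ω - m)]
        ring
      · rw [hg_def]
        simp only [if_neg (not_lt.2 h.ge), if_neg (not_lt.2 h.le), ← h]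
        simp
      · rw [hg_def]
        simp only [if_neg (not_lt.2 h.le), if_pos h, abs_of_neg (by linarith : Y ω - m < 0)]
        ring
    have i1 : Integrable (fun ω => |Y ω - m| + m * (if m < Y ω then (1:ℝ) else 0)) P :=
      hψInt.add (hIndAInt.const_mul m)
    calc ∫ ω, g ω ∂P
        = ∫ ω, (|Y ω - m| + m * (if m < Y ω then (1:ℝ) else 0)
            - m * (if Y ω < m then (1:ℝ) else 0)) ∂P := integral_congr_ae (ae_of_all _ hpt)
      _ = ∫ ω, |Y ω - m| ∂P + m * ∫ ω, (if m < Y ω then (1:ℝ) else 0) ∂P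
            - m * ∫ ω, (if Y ω < m then (1:ℝ) else 0) ∂P := by
          rw [integral_sub i1 (hIndBInt.const_mul m),
            integral_add hψInt (hIndAInt.const_mul m), integral_const_mul, integral_const_mul]
      _ = ∫ ω, |Y ω - m| ∂P := by rw [hIA, hIB]; ring
  -- P {Y = m} = 0
  have heq0 : P {ω | Y ω = m} = 0 := by
    have hdisj : Disjoint {ω | m < Y ω} {ω | Y ω < m} := by
      rw [Set.disjoint_left]
      intro ω h1 h2
      exact absurd (lt_trans h1 h2) (lt_irrefl m)
    have hunion : P ({ω | m < Y ω} ∪ {ω | Y ω < m}) = 1 := by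
      rw [measure_union hdisj hB, hgt, hlt, ENNReal.div_add_div_same, one_add_one_eq_two,
        ENNReal.div_self (by norm_num) (by norm_num)]
    have hsub : {ω | Y ω = m} ⊆ ({ω | m < Y ω} ∪ {ω | Y ω < m})ᶜ := by
      intro ω h
      simp only [Set.mem_compl_iff, Set.mem_union, Set.mem_setOf_eq] at *
      push_neg
      exact ⟨by rw [h], by rw [h]⟩
    refine le_antisymm ?_ (by simp)
    calc P {ω | Y ω = m} ≤ P (({ω | m < Y ω} ∪ {ω | Y ω < m})ᶜ) := measure_mono hsub
      _ = 1 - P ({ω | m < Y ω} ∪ {ω | Y ω < m}) := by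
          rw [measure_compl (hA.union hB) (measure_ne_top _ _)]; simp
      _ = 0 := by rw [hunion]; simp
  have haeNe : ∀ᵐ ω ∂P, Y ω ≠ m := by
    simp only [ae_iff, not_ne_iff]
    exact heq0
  -- facts about S*
  have hSstarMeas : Measurable (fun ω => if m < Y ω then s₀ + γ else s₀ - γ) :=
    Measurable.ite hA measurable_const measurable_const
  have hSstarBd : ∀ᵐ ω ∂P, s₀ - γ ≤ (if m < Y ω then s₀ + γ else s₀ - γ) ∧
      (if m < Y ω then s₀ + γ else s₀ - γ) ≤ s₀ + γ := by
    refine ae_of_all _ fun ω => ?_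
    split_ifs <;> constructor <;> linarith
  have hSstarInt : ∫ ω, (if m < Y ω then s₀ + γ else s₀ - γ) ∂P = s₀ := by
    have h : (fun ω => if m < Y ω then s₀ + γ else s₀ - γ)
        = fun ω => (s₀ - γ) + (2*γ) * (if m < Y ω then (1:ℝ) else 0) := by
      funext ω; split_ifs <;> ring
    rw [h, integral_add (integrable_const _) (hIndAInt.const_mul _), integral_const,
      integral_const_mul, hIA]
    simp [measure_univ]
    ring
  have hSstarVal : ∫ ω, -((if m < Y ω then s₀ + γ else s₀ - γ) * Y ω) ∂P =
      (∫ ω, -(s₀ * Y ω) ∂P) - γ * ∫ ω, g ω ∂P := by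
    have hcong : ∀ᵐ ω ∂P, -((if m < Y ω then s₀ + γ else s₀ - γ) * Y ω)
        = -(s₀ * Y ω) - γ * g ω := by
      filter_upwards [haeNe] with ω hne
      rcases lt_trichotomy m (Y ω) with h | h | h
      · rw [hg_def]
        simp only [if_pos h, if_neg (not_lt.2 h.le)]
        ring
      · exact absurd h.symm hne
      · rw [hg_def]
        simp only [if_neg (not_lt.2 h.le), if_pos h]
        ring
    have i1 : Integrable (fun ω => -(s₀ * Y ω)) P := (hY.const_mul s₀).neg
    rw [integral_congr_ae hcong, integral_sub i1 (hgInt.const_mul γ), integral_const_mul]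
  refine ⟨⟨⟨fun ω => if m < Y ω then s₀ + γ else s₀ - γ,
      hSstarMeas, hSstarBd, hSstarInt, hSstarVal.symm⟩, ?_⟩,
    hSstarMeas, hSstarBd, hSstarInt, hSstarVal⟩
  -- lower bound
  rintro v ⟨S, hSmeas, hSbd, hSint, rfl⟩
  have hSabs : ∀ᵐ ω ∂P, |S ω - s₀| ≤ γ := by
    filter_upwards [hSbd] with ω hb
    rw [abs_le]; exact ⟨by linarith [hb.1], by linarith [hb.2]⟩
  have hSInt : Integrable S P := by
    refine (integrable_const (|s₀| + γ)).mono' hSmeas.aestronglyMeasurable ?_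
    filter_upwards [hSbd] with ω hb
    rw [Real.norm_eq_abs, abs_le]
    exact ⟨by linarith [hb.1, neg_abs_le s₀], by linarith [hb.2, le_abs_self s₀]⟩
  have hSYInt : Integrable (fun ω => S ω * Y ω) P := by
    refine (hY.const_mul (|s₀| + γ)).mono (hSmeas.mul hYm).aestronglyMeasurable ?_
    filter_upwards [hSbd] with ω hb
    simp only [Real.norm_eq_abs, abs_mul]
    have h1 : |S ω| ≤ |s₀| + γ := by
      rw [abs_le]
      exact ⟨by linarith [hb.1, neg_abs_le s₀], by linarith [hb.2, le_abs_self s₀]⟩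
    calc |S ω| * |Y ω| ≤ (|s₀| + γ) * |Y ω| := mul_le_mul_of_nonneg_right h1 (abs_nonneg _)
      _ = |(|s₀| + γ)| * |Y ω| := by
          rw [abs_of_nonneg (by positivity : (0:ℝ) ≤ |s₀| + γ)]
  have hInt1 : Integrable (fun ω => (s₀ - S ω) * (Y ω - m)) P := by
    have h : (fun ω => (s₀ - S ω) * (Y ω - m))
        = fun ω => s₀ * Y ω - S ω * Y ω - m * s₀ + m * S ω := by
      funext ω; ring
    rw [h]
    exact (((hY.const_mul s₀).sub hSYInt).sub (integrable_const (m * s₀))).add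
      (hSInt.const_mul m)
  have hpos : 0 ≤ ∫ ω, ((s₀ - S ω) * (Y ω - m) + γ * |Y ω - m|) ∂P := by
    refine integral_nonneg_of_ae ?_
    filter_upwards [hSabs] with ω habs
    have h2 : |s₀ - S ω| ≤ γ := by rw [abs_sub_comm]; exact habs
    show (0:ℝ) ≤ (s₀ - S ω) * (Y ω - m) + γ * |Y ω - m|
    have h1 : |(s₀ - S ω) * (Y ω - m)| ≤ γ * |Y ω - m| := by
      rw [abs_mul]
      exact mul_le_mul_of_nonneg_right h2 (abs_nonneg _)
    linarith [neg_abs_le ((s₀ - S ω) * (Y ω - m))]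
  have hsplit : ∫ ω, ((s₀ - S ω) * (Y ω - m) + γ * |Y ω - m|) ∂P
      = s₀ * ∫ ω, Y ω ∂P - ∫ ω, S ω * Y ω ∂P + γ * ∫ ω, |Y ω - m| ∂P := by
    rw [integral_add hInt1 (hψInt.const_mul γ), integral_const_mul]
    congr 1
    have h : (fun ω => (s₀ - S ω) * (Y ω - m))
        = fun ω => s₀ * Y ω - S ω * Y ω - m * s₀ + m * S ω := by
      funext ω; ring
    have ia : Integrable (fun ω => s₀ * Y ω - S ω * Y ω) P := (hY.const_mul s₀).sub hSYInt
    have ib : Integrable (fun ω => s₀ * Y ω - S ω * Y ω - m * s₀) P :=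
      ia.sub (integrable_const (m * s₀))
    rw [h, integral_add ib (hSInt.const_mul m), integral_sub ia (integrable_const (m * s₀)),
      integral_sub (hY.const_mul s₀) hSYInt, integral_const_mul, integral_const_mul,
      integral_const_mul, hSint, integral_const]
    simp [measure_univ]
  have key : ∫ ω, S ω * Y ω ∂P ≤ s₀ * ∫ ω, Y ω ∂P + γ * ∫ ω, g ω ∂P := by
    rw [hgψ]
    linarith [hpos, hsplit.symm.le, hsplit.le]
  have e1 : ∫ ω, -(S ω * Y ω) ∂P = -∫ ω, S ω * Y ω ∂P := integral_neg _
  have e2 : ∫ ω, -(s₀ * Y ω) ∂P = -(s₀ * ∫ ω, Y ω ∂P) := by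
    rw [integral_neg, integral_const_mul]
  rw [e1, e2]
  linarith
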